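/- For any digraph G and any acyclic set I of G, the reduced digraph G^{-I} has a loop on every vertex if and only if I is a maximal acyclic set of G. -/

import Mathlib

/-- Path from `u` to `w` with all internal vertices in `I` (at least one). -/
def PathThrough {V : Type*} (G : V → V → Prop) (I : Set V) (u w : V) : Prop :=
  ∃ l : List V, l ≠ [] ∧ l.Nodup ∧ (∀ i ∈ l, i ∈ I) ∧ List.Chain G u (l ++ [w])

/-- The simultaneous `I`-reduction of a digraph. -/
def gReduceSet {V : Type*} (G : V → V → Prop) (I : Set V) : V → V → Prop :=
  fun a b => a ∉ I ∧ b ∉ I ∧ (G a b ∨ PathThrough G I a b)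

/-- `I` is an acyclic set of `G`. -/
def AcyclicIn {V : Type*} (G : V → V → Prop) (I : Set V) : Prop :=
  ∀ a ∈ I, ¬ ∃ l : List V, (∀ i ∈ l, i ∈ I) ∧ List.Chain G a (l ++ [a])

theorem List.chain_split {α : Type*} {R : α → α → Prop} {a b : α} {l₁ l₂ : List α} :
    List.Chain R a (l₁ ++ b :: l₂) ↔ List.Chain R a (l₁ ++ [b]) ∧ List.Chain R b l₂ :=
  List.isChain_cons_split

private lemma exists_dup {V : Type*} : ∀ {l : List V}, ¬ l.Nodup →
    ∃ (x : V) (l1 l2 l3 : List V), l = l1 ++ x :: l2 ++ x :: l3 := by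
  intro l h
  induction l with
  | nil => exact absurd List.nodup_nil h
  | cons a t ih =>
    rw [List.nodup_cons] at h
    push_neg at h
    by_cases ha : a ∈ t
    · obtain ⟨s, r, rfl⟩ := List.append_of_mem ha
      exact ⟨a, [], s, r, rfl⟩
    · obtain ⟨x, l1, l2, l3, rfl⟩ := ih (h ha)
      exact ⟨x, a :: l1, l2, l3, rfl⟩

private lemma dedup_chain {V : Type*} (G : V → V → Prop) (I : Set V) (u w : V) :
    ∀ n (l : List V), l.length ≤ n → l ≠ [] → (∀ i ∈ l, i ∈ I) →
      List.Chain G u (l ++ [w]) →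
      ∃ l', l' ≠ [] ∧ l'.Nodup ∧ (∀ i ∈ l', i ∈ I) ∧ List.Chain G u (l' ++ [w]) := by
  intro n
  induction n with
  | zero =>
    intro l hl hne _ _
    simp [List.length_eq_zero_iff] at hl
    exact absurd hl hne
  | succ n ih =>
    intro l hl hne hmem hchain
    by_cases hnd : l.Nodup
    · exact ⟨l, hne, hnd, hmem, hchain⟩
    · obtain ⟨x, l1, l2, l3, rfl⟩ := exists_dup hnd
      have hchain' : List.Chain G u (l1 ++ x :: (l2 ++ x :: (l3 ++ [w]))) := by
        simpa using hchain
      obtain ⟨c1, c2⟩ := (List.chain_split).mp hchain'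
      obtain ⟨_, c4⟩ := (List.chain_split).mp c2
      have hnew : List.Chain G u ((l1 ++ x :: l3) ++ [w]) := by
        simpa using (List.chain_split).mpr ⟨c1, c4⟩
      have hlen : (l1 ++ x :: l3).length ≤ n := by
        simp only [List.length_append, List.length_cons] at hl ⊢
        omega
      refine ih (l1 ++ x :: l3) hlen (by simp) (fun i hi => ?_) hnew
      apply hmem
      simp only [List.mem_append, List.mem_cons] at hi ⊢
      tauto

private lemma extract_loop {V : Type*} (G : V → V → Prop) (I : Set V) (v : V) :
    ∀ n (m : List V), m.length ≤ n → (∀ i ∈ m, i ∈ I ∪ {v}) →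
      List.Chain G v (m ++ [v]) → G v v ∨ PathThrough G I v v := by
  intro n
  induction n with
  | zero =>
    intro m hm _ hchain
    simp [List.length_eq_zero_iff] at hm
    subst hm
    left; simpa [List.Chain, List.isChain_pair] using hchain
  | succ n ih =>
    intro m hm hmem hchain
    by_cases hvm : v ∈ m
    · obtain ⟨m1, m2, rfl⟩ := List.append_of_mem hvm
      have hchain' : List.Chain G v (m1 ++ v :: (m2 ++ [v])) := by simpa using hchain
      obtain ⟨c1, _⟩ := (List.chain_split).mp hchain'
      have hlen : m1.length ≤ n := by
        simp only [List.length_append, List.length_cons] at hm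
        omega
      refine ih m1 hlen (fun i hi => hmem i (by simp [hi])) c1
    · have hmemI : ∀ i ∈ m, i ∈ I := by
        intro i hi
        rcases hmem i hi with h | h
        · exact h
        · exact absurd (Set.mem_singleton_iff.mp h ▸ hi) hvm
      rcases eq_or_ne m [] with rfl | hne
      · left; simpa [List.Chain, List.isChain_pair] using hchain
      · right
        exact dedup_chain G I v v m.length m le_rfl hne hmemI hchain

/-- For an acyclic set `I` of a (finite) digraph `G`, the reduction `G^{-I}` has a
loop on every one of its vertices iff `I` is a maximal acyclic set of `G`. -/
theorem stmt4 {V : Type*} [Fintype V] (G : V → V → Prop) (I : Set V)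
    (hI : AcyclicIn G I) :
    (∀ v ∉ I, gReduceSet G I v v) ↔
      (∀ J : Set V, AcyclicIn G J → I ⊆ J → J = I) := by
  constructor
  · intro h J hJ hIJ
    ext x
    refine ⟨fun hxJ => ?_, fun hxI => hIJ hxI⟩
    by_contra hxI
    obtain ⟨-, -, hloop⟩ := h x hxI
    rcases hloop with hG | ⟨l, hne, hnd, hmem, hc⟩
    · exact hJ x hxJ ⟨[], by simp, by simpa [List.Chain, List.isChain_pair] using hG⟩
    · exact hJ x hxJ ⟨l, fun i hi => hIJ (hmem i hi), hc⟩
  · intro hmax v hv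
    have hnot : ¬ AcyclicIn G (I ∪ {v}) := by
      intro hac
      have heq := hmax _ hac Set.subset_union_left
      exact hv (heq ▸ Set.mem_union_right _ rfl)
    unfold AcyclicIn at hnot
    push_neg at hnot
    obtain ⟨a, ha, l, hl, hc⟩ := hnot
    refine ⟨hv, hv, ?_⟩
    rcases eq_or_ne a v with rfl | hav
    · exact extract_loop G I a l.length l le_rfl hl hc
    · have haI : a ∈ I := by
        rcases ha with h | h
        · exact h
        · exact absurd (Set.mem_singleton_iff.mp h) hav
      have hvl : v ∈ l := by
        by_contra hvl
        refine hI a haI ⟨l, fun i hi => ?_, hc⟩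
        rcases hl i hi with h | h
        · exact h
        · exact absurd (Set.mem_singleton_iff.mp h ▸ hi) hvl
      obtain ⟨l1, l2, rfl⟩ := List.append_of_mem hvl
      have hc' : List.Chain G a (l1 ++ v :: (l2 ++ [a])) := by simpa using hc
      obtain ⟨c1, c2⟩ := (List.chain_split).mp hc'
      have hnew : List.Chain G v ((l2 ++ a :: l1) ++ [v]) := by
        simpa using (List.chain_split).mpr ⟨c2, c1⟩
      refine extract_loop G I v (l2 ++ a :: l1).length _ le_rfl (fun i hi => ?_) hnew
      simp only [List.mem_append, List.mem_cons] at hi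
      rcases hi with h | h | h
      · exact hl i (by simp [h])
      · exact Or.inl (h ▸ haI)
      · exact hl i (by simp [h])
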